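/- Let S be a real f×L matrix such that S Sᵀ is invertible, and let c ∈ ℝ^L be a vector lying in the column space of Sᵀ (i.e., c = Sᵀ y for some y ∈ ℝ^f). Let [S, Sc] denote the f×(L+1) matrix obtained by appending the column Sc to S. Then det([S,Sc][S,Sc]ᵀ) = det(S Sᵀ) · (1 + ‖c‖₂²); equivalently, Rectvol([S,Sc]) = Rectvol(S) · √(1 + ‖c‖₂²). -/

import Mathlib

open Matrix

/-- Equation (11): appending the column `S c` (with `c` in the row space of `S`,
i.e. the column space of `Sᵀ`) multiplies `det (S Sᵀ)` by `1 + ‖c‖₂²`;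
equivalently `Rectvol [S, Sc] = Rectvol S · √(1 + ‖c‖₂²)`. -/
theorem rectvol_append_col
    (f L : ℕ) (S : Matrix (Fin f) (Fin L) ℝ) (hinv : IsUnit (S * Sᵀ))
    (c : Fin L → ℝ) (hc : ∃ y : Fin f → ℝ, c = Sᵀ.mulVec y)
    (T : Matrix (Fin f) (Fin (L + 1)) ℝ)
    (hT : T = Matrix.of fun a b => Fin.lastCases (S.mulVec c a) (fun j => S a j) b) :
    (T * Tᵀ).det = (S * Sᵀ).det * (1 + ∑ j, c j ^ 2) ∧
      Real.sqrt (T * Tᵀ).det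
        = Real.sqrt (S * Sᵀ).det * Real.sqrt (1 + ∑ j, c j ^ 2) := by
  obtain ⟨y, hy⟩ := hc
  set u : Fin f → ℝ := S.mulVec c with hu
  have hdet : IsUnit (S * Sᵀ).det := (Matrix.isUnit_iff_isUnit_det _).mp hinv
  have hTT : T * Tᵀ = S * Sᵀ + replicateCol Unit u * replicateRow Unit u := by
    ext a b
    simp only [Matrix.mul_apply, Matrix.add_apply, Matrix.transpose_apply, hT,
      Matrix.of_apply]
    rw [Fin.sum_univ_castSucc]
    simp [Matrix.mul_apply, Matrix.replicateCol_apply, Matrix.replicateRow_apply]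
  have key : (T * Tᵀ).det = (S * Sᵀ).det * (1 + ∑ j, c j ^ 2) := by
    rw [hTT, det_add_replicateCol_mul_replicateRow hdet]
    congr 1
    rw [det_unique]
    have h1 : (replicateRow Unit u * (S * Sᵀ)⁻¹ * replicateCol Unit u) default default
        = u ⬝ᵥ ((S * Sᵀ)⁻¹ *ᵥ u) := by
      simp [Matrix.mul_apply, Matrix.replicateRow_apply, Matrix.replicateCol_apply, dotProduct,
        Matrix.mulVec, Finset.sum_mul, Finset.mul_sum, mul_assoc]
      rw [Finset.sum_comm]
    have hinvu : (S * Sᵀ)⁻¹ *ᵥ u = y := by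
      have : u = (S * Sᵀ) *ᵥ y := by
        rw [hu, hy, Matrix.mulVec_mulVec]
      rw [this, Matrix.mulVec_mulVec, Matrix.nonsing_inv_mul _ hdet, Matrix.one_mulVec]
    have h2 : u ⬝ᵥ y = ∑ j, c j ^ 2 := by
      rw [hu, dotProduct_comm, Matrix.dotProduct_mulVec, ← Matrix.mulVec_transpose, ← hy]
      simp [dotProduct, sq]
    rw [Matrix.add_apply]
    rw [Matrix.one_apply_eq, h1, hinvu, h2]
  refine ⟨key, ?_⟩
  rw [key, Real.sqrt_mul' _ (by positivity)]
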